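/- arXiv:1507.04840 — 4 statements merged into one kernel-verified Lean document; each statement's English description precedes it below -/
import Mathlib

section
/- Let F be an algebraically closed field of characteristic zero and let a ∈ F(t) be a univariate rational function. Then there exist g_0 ∈ F(t), a natural number L, pairwise distinct elements β_1, …, β_L ∈ F, and constants γ_1, …, γ_L ∈ F such that a = D(g_0) + Σ_{ℓ=1}^{L} γ_ℓ/(t − β_ℓ), where D is the derivative with respect to t. (Base case of the multivariate Christopher theorem.) -/
open Polynomial

namespace ChristopherBaseAux
set_option linter.unusedSectionVars false

variable {F : Type*} [Field F] [CharZero F]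

lemma exists_antideriv (p : F[X]) : ∃ P : F[X], derivative P = p := by
  refine ⟨∑ i ∈ Finset.range (p.natDegree + 1), C (p.coeff i / (i + 1)) * X ^ (i + 1), ?_⟩
  rw [derivative_sum]
  conv_rhs => rw [p.as_sum_range_C_mul_X_pow]
  refine Finset.sum_congr rfl fun i _ => ?_
  have h : ((i : F) + 1) ≠ 0 := Nat.cast_add_one_ne_zero i
  rw [derivative_C_mul_X_pow]
  push_cast
  rw [div_mul_cancel₀ _ h]

variable (D : Derivation F (RatFunc F) (RatFunc F))

/-- The shape we want: derivative plus simple fractions. -/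
def Expr (a : RatFunc F) : Prop :=
  ∃ g : RatFunc F, ∃ γ : F →₀ F,
    a = D g + γ.sum fun β c => RatFunc.C c / (RatFunc.X - RatFunc.C β)

lemma expr_zero : Expr D 0 := ⟨0, 0, by simp⟩

lemma expr_add {a b : RatFunc F} (ha : Expr D a) (hb : Expr D b) : Expr D (a + b) := by
  obtain ⟨g₁, γ₁, h₁⟩ := ha
  obtain ⟨g₂, γ₂, h₂⟩ := hb
  refine ⟨g₁ + g₂, γ₁ + γ₂, ?_⟩
  rw [h₁, h₂, map_add, Finsupp.sum_add_index' (fun β => by simp) (fun β c₁ c₂ => by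
    rw [map_add, add_div])]
  ring

lemma expr_D (g : RatFunc F) : Expr D (D g) := ⟨g, 0, by simp⟩

lemma expr_single (β c : F) :
    Expr D (RatFunc.C c / (RatFunc.X - RatFunc.C β)) :=
  ⟨0, Finsupp.single β c, by
    rw [Finsupp.sum_single_index (by simp)]; simp⟩

end ChristopherBaseAux

namespace ChristopherBaseAux
set_option linter.unusedSectionVars false

variable {F : Type*} [Field F] [CharZero F]
variable (D : Derivation F (RatFunc F) (RatFunc F))
lemma expr_C_div_pow (hD : ∀ p : F[X],
      D (algebraMap F[X] (RatFunc F) p) = algebraMap F[X] (RatFunc F) (derivative p))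
    (β c : F) : ∀ k : ℕ,
    Expr D (RatFunc.C c / (RatFunc.X - RatFunc.C β) ^ k) := by
  have hXC : (RatFunc.X - RatFunc.C β : RatFunc F)
      = algebraMap F[X] (RatFunc F) (X - C β) := by
    rw [map_sub, RatFunc.algebraMap_X, RatFunc.algebraMap_C]
  have hu : (RatFunc.X - RatFunc.C β : RatFunc F) ≠ 0 := by
    rw [hXC]; exact RatFunc.algebraMap_ne_zero (X_sub_C_ne_zero β)
  have hDu : D (RatFunc.X - RatFunc.C β) = 1 := by
    rw [hXC, hD]; simp
  intro k
  match k with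
  | 0 =>
    have : (RatFunc.C c / (RatFunc.X - RatFunc.C β) ^ 0 : RatFunc F)
        = D (algebraMap F[X] (RatFunc F) (C c * X)) := by
      rw [hD]; simp [RatFunc.algebraMap_C]
    rw [this]; exact expr_D D _
  | 1 => simpa using expr_single D β c
  | (n + 2) =>
    set u : RatFunc F := RatFunc.X - RatFunc.C β with hu_def
    have hn : ((n : F) + 1) ≠ 0 := Nat.cast_add_one_ne_zero n
    have key : D (RatFunc.C (-c / (n + 1)) / u ^ (n + 1)) = RatFunc.C c / u ^ (n + 2) := by
      rw [Derivation.leibniz_div]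
      have h1 : D (RatFunc.C (-c / (n + 1))) = 0 := by
        rw [← RatFunc.algebraMap_eq_C]; exact Derivation.map_algebraMap D _
      have h2 : D (u ^ (n + 1)) = ((n : RatFunc F) + 1) * u ^ n := by
        rw [Derivation.leibniz_pow, hDu]
        simp [smul_eq_mul]
      rw [h1, h2]
      have hC : (RatFunc.C (-c / (n + 1)) : RatFunc F)
          = RatFunc.C (-c) / ((n : RatFunc F) + 1) := by
        rw [map_div₀]; congr 1
        push_cast
        rw [map_add, map_natCast, map_one]
      have hn' : ((n : RatFunc F) + 1) ≠ 0 := by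
        have h3 : ((n : RatFunc F) + 1) = RatFunc.C ((n : F) + 1) := by
          rw [map_add, map_natCast, map_one]
        rw [h3, ← map_zero (RatFunc.C : F →+* RatFunc F)]
        exact fun h => hn (RingHom.injective _ h)
      have hupow : u ^ (n+1) ≠ 0 := pow_ne_zero _ hu
      simp only [smul_eq_mul, hC, map_neg]
      field_simp
      ring
    rw [← key]; exact expr_D D _

end ChristopherBaseAux

namespace ChristopherBaseAux
set_option linter.unusedSectionVars false

variable {F : Type*} [Field F] [CharZero F]
variable (D : Derivation F (RatFunc F) (RatFunc F))

lemma expr_poly (hD : ∀ p : F[X],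
      D (algebraMap F[X] (RatFunc F) p) = algebraMap F[X] (RatFunc F) (derivative p))
    (f : F[X]) : Expr D (algebraMap F[X] (RatFunc F) f) := by
  obtain ⟨P, hP⟩ := exists_antideriv f
  rw [← hP, ← hD]
  exact expr_D D _

lemma expr_poly_div_pow (hD : ∀ p : F[X],
      D (algebraMap F[X] (RatFunc F) p) = algebraMap F[X] (RatFunc F) (derivative p))
    (β : F) : ∀ (m : ℕ) (f : F[X]),
    Expr D (algebraMap F[X] (RatFunc F) f / (RatFunc.X - RatFunc.C β) ^ m) := by
  have hXC : (RatFunc.X - RatFunc.C β : RatFunc F)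
      = algebraMap F[X] (RatFunc F) (X - C β) := by
    rw [map_sub, RatFunc.algebraMap_X, RatFunc.algebraMap_C]
  have hu : (RatFunc.X - RatFunc.C β : RatFunc F) ≠ 0 := by
    rw [hXC]; exact RatFunc.algebraMap_ne_zero (X_sub_C_ne_zero β)
  intro m
  induction m with
  | zero => intro f; simpa using expr_poly D hD f
  | succ m ih =>
    intro f
    set c := f.eval β with hc
    set f₁ := f /ₘ (X - C β) with hf₁
    have hf : C c + (X - C β) * f₁ = f := by
      rw [← modByMonic_X_sub_C_eq_C_eval]
      exact modByMonic_add_div f (X - C β)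
    have key : algebraMap F[X] (RatFunc F) f / (RatFunc.X - RatFunc.C β) ^ (m + 1)
        = algebraMap F[X] (RatFunc F) f₁ / (RatFunc.X - RatFunc.C β) ^ m
          + RatFunc.C c / (RatFunc.X - RatFunc.C β) ^ (m + 1) := by
      rw [← hf, map_add, map_mul, ← hXC, RatFunc.algebraMap_C]
      field_simp
      ring
    rw [key]
    exact expr_add D (ih _) (expr_C_div_pow D hD β _ _)

lemma expr_div_const (hD : ∀ p : F[X],
      D (algebraMap F[X] (RatFunc F) p) = algebraMap F[X] (RatFunc F) (derivative p))
    (q p : F[X]) (hq : q ≠ 0) (hdeg : q.natDegree = 0) :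
    Expr D (algebraMap F[X] (RatFunc F) p / algebraMap F[X] (RatFunc F) q) := by
  have hq0 : q = C (q.coeff 0) := eq_C_of_natDegree_eq_zero hdeg
  have hc : q.coeff 0 ≠ 0 := fun h => hq (by rw [hq0, h, map_zero])
  have : algebraMap F[X] (RatFunc F) p / algebraMap F[X] (RatFunc F) q
      = algebraMap F[X] (RatFunc F) (C (q.coeff 0)⁻¹ * p) := by
    rw [map_mul, RatFunc.algebraMap_C, hq0, RatFunc.algebraMap_C, map_inv₀]
    field_simp
    simp
  rw [this]
  exact expr_poly D hD _

lemma expr_div [IsAlgClosed F] (hD : ∀ p : F[X],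
      D (algebraMap F[X] (RatFunc F) p) = algebraMap F[X] (RatFunc F) (derivative p)) :
    ∀ (n : ℕ) (q p : F[X]), q ≠ 0 → q.natDegree ≤ n →
    Expr D (algebraMap F[X] (RatFunc F) p / algebraMap F[X] (RatFunc F) q) := by
  intro n
  induction n with
  | zero =>
    intro q p hq hdeg
    exact expr_div_const D hD q p hq (Nat.le_zero.mp hdeg)
  | succ n ih =>
    intro q p hq hdeg
    by_cases hdeg0 : q.natDegree = 0
    · exact expr_div_const D hD q p hq hdeg0
    · -- q has a root β
      have hdegq : q.degree ≠ 0 := by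
        rw [degree_eq_natDegree hq]
        exact_mod_cast hdeg0
      obtain ⟨β, hβ⟩ := IsAlgClosed.exists_root q hdegq
      set m := rootMultiplicity β q with hm
      obtain ⟨r, hqr, hndvd⟩ := q.exists_eq_pow_rootMultiplicity_mul_and_not_dvd hq β
      have hm1 : 1 ≤ m := (rootMultiplicity_pos hq).mpr hβ
      have hr : r ≠ 0 := fun h => hq (by rw [hqr, h, mul_zero])
      have hdegr : r.natDegree ≤ n := by
        have h1 : q.natDegree = m + r.natDegree := by
          rw [hqr, natDegree_mul (pow_ne_zero _ (X_sub_C_ne_zero β)) hr,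
            natDegree_pow, natDegree_X_sub_C, mul_one]
        omega
      -- coprimality and Bezout
      have hcop : IsCoprime ((X - C β) ^ m) r :=
        (((irreducible_X_sub_C β).coprime_iff_not_dvd).mpr hndvd).pow_left
      obtain ⟨u, v, huv⟩ := hcop
      -- split the fraction
      have hXC : (RatFunc.X - RatFunc.C β : RatFunc F)
          = algebraMap F[X] (RatFunc F) (X - C β) := by
        rw [map_sub, RatFunc.algebraMap_X, RatFunc.algebraMap_C]
      have hA : algebraMap F[X] (RatFunc F) ((X - C β) ^ m) ≠ 0 :=
        RatFunc.algebraMap_ne_zero (pow_ne_zero _ (X_sub_C_ne_zero β))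
      have hB : algebraMap F[X] (RatFunc F) r ≠ 0 := RatFunc.algebraMap_ne_zero hr
      have hu : (RatFunc.X - RatFunc.C β : RatFunc F) ≠ 0 := by
        rw [hXC]; exact RatFunc.algebraMap_ne_zero (X_sub_C_ne_zero β)
      have hqA : algebraMap F[X] (RatFunc F) q
          = (RatFunc.X - RatFunc.C β) ^ m * algebraMap F[X] (RatFunc F) r := by
        rw [hqr, map_mul, map_pow, ← hXC]
      have huv' : algebraMap F[X] (RatFunc F) u * (RatFunc.X - RatFunc.C β) ^ m
          + algebraMap F[X] (RatFunc F) v * algebraMap F[X] (RatFunc F) r = 1 := by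
        rw [hXC, ← map_pow, ← map_mul, ← map_mul, ← map_add, huv, map_one]
      have key : algebraMap F[X] (RatFunc F) p / algebraMap F[X] (RatFunc F) q
          = algebraMap F[X] (RatFunc F) (p * u) / algebraMap F[X] (RatFunc F) r
            + algebraMap F[X] (RatFunc F) (p * v) / (RatFunc.X - RatFunc.C β) ^ m := by
        rw [hqA, map_mul, map_mul]
        field_simp
        linear_combination (-(algebraMap F[X] (RatFunc F) p)) * huv'
      rw [key]
      exact expr_add D (ih r (p * u) hr hdegr) (expr_poly_div_pow D hD β m (p * v))

end ChristopherBaseAux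

/-- **Base case of the multivariate Christopher theorem.**
`F` is an algebraically closed field of characteristic zero, `F(t) = RatFunc F` is the
field of univariate rational functions, and `D` is the unique derivation on `F(t)`
extending the polynomial derivative `d/dt`.  Then every `a ∈ F(t)` can be written as
`a = D(g₀) + Σ_{ℓ=1}^{L} γ_ℓ/(t − β_ℓ)` with `g₀ ∈ F(t)`, pairwise distinct
`β_1, …, β_L ∈ F` and constants `γ_1, …, γ_L ∈ F`. -/
theorem christopher_base_case
    (F : Type*) [Field F] [IsAlgClosed F] [CharZero F]
    (D : Derivation F (RatFunc F) (RatFunc F))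
    (hD : ∀ p : Polynomial F,
      D (algebraMap (Polynomial F) (RatFunc F) p)
        = algebraMap (Polynomial F) (RatFunc F) (Polynomial.derivative p))
    (a : RatFunc F) :
    ∃ (g₀ : RatFunc F) (L : ℕ) (β γ : Fin L → F),
      Function.Injective β ∧
      a = D g₀ + ∑ ℓ, RatFunc.C (γ ℓ) / (RatFunc.X - RatFunc.C (β ℓ)) := by
  have h := ChristopherBaseAux.expr_div D hD a.denom.natDegree a.denom a.num
    (RatFunc.denom_ne_zero a) le_rfl
  rw [RatFunc.num_div_denom] at h
  obtain ⟨g, γ, hg⟩ := h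
  refine ⟨g, γ.support.card, fun ℓ => (γ.support.equivFin.symm ℓ : F),
    fun ℓ => γ (γ.support.equivFin.symm ℓ : F), ?_, ?_⟩
  · exact Subtype.coe_injective.comp γ.support.equivFin.symm.injective
  · rw [hg]
    congr 1
    rw [Finsupp.sum,
      ← Finset.sum_coe_sort γ.support (fun b => RatFunc.C (γ b) / (RatFunc.X - RatFunc.C b))]
    exact (Equiv.sum_comp γ.support.equivFin.symm
      (fun x : γ.support => RatFunc.C (γ (x : F)) / (RatFunc.X - RatFunc.C (x : F)))).symm
end

section
/- Let K be a field of characteristic zero equipped with a derivation δ, extend δ to a derivation of K(X) by setting δ(X) = 0, and let D be the derivative with respect to X on K(X). Suppose a ∈ K(X) can be written as a = D(g_0) + Σ_{ℓ=1}^{L} γ_ℓ/(X − β_ℓ) with g_0 ∈ K(X), pairwise distinct β_1, …, β_L ∈ K, and γ_1, …, γ_L ∈ K, and suppose there exists b ∈ K(X) with δ(a) = D(b). Then δ(γ_ℓ) = 0 for every ℓ = 1, …, L. (The residues appearing in a compatible system are constants.) -/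
open Polynomial

namespace ResiduesConstAux

variable {K : Type*} [Field K]

lemma X_sub_C_ne_zero' (b : K) : RatFunc.X - RatFunc.C b ≠ 0 := by
  rw [← RatFunc.algebraMap_X, ← RatFunc.algebraMap_C, ← map_sub]
  exact RatFunc.algebraMap_ne_zero (Polynomial.X_sub_C_ne_zero b)

lemma comm_eq (δ' : Derivation ℤ (RatFunc K) (RatFunc K))
    (D : Derivation K (RatFunc K) (RatFunc K))
    (hC : ∀ x : K, δ' (D (RatFunc.C x)) = D (δ' (RatFunc.C x)))
    (hX : δ' (D RatFunc.X) = D (δ' RatFunc.X)) (f : RatFunc K) :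
    δ' (D f) = D (δ' f) := by
  set E : RatFunc K → RatFunc K := fun g => δ' (D g) - D (δ' g) with hE
  have Eadd : ∀ g h : RatFunc K, E (g + h) = E g + E h := by
    intro g h
    simp only [hE, map_add]
    ring
  have Emul : ∀ g h : RatFunc K, E (g * h) = g * E h + h * E g := by
    intro g h
    simp only [hE, Derivation.leibniz, smul_eq_mul, map_add]
    ring
  have EX : E RatFunc.X = 0 := sub_eq_zero.mpr hX
  suffices h : E f = 0 by
    exact sub_eq_zero.mp h
  have Epoly : ∀ p : K[X], E (algebraMap K[X] (RatFunc K) p) = 0 := by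
    intro p
    induction p using Polynomial.induction_on with
    | C a => rw [RatFunc.algebraMap_C]; exact sub_eq_zero.mpr (hC a)
    | add p q hp hq => rw [map_add, Eadd, hp, hq, add_zero]
    | monomial n a ih =>
      have hsplit : algebraMap K[X] (RatFunc K) (Polynomial.C a * X ^ (n + 1))
          = algebraMap K[X] (RatFunc K) (Polynomial.C a * X ^ n) * RatFunc.X := by
        rw [← RatFunc.algebraMap_X (K := K), ← map_mul]
        ring_nf
      rw [hsplit, Emul, ih, EX, mul_zero, mul_zero, add_zero]
  have hd : algebraMap K[X] (RatFunc K) f.denom ≠ 0 :=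
    RatFunc.algebraMap_ne_zero (RatFunc.denom_ne_zero f)
  have hfd : algebraMap K[X] (RatFunc K) f.num = f * algebraMap K[X] (RatFunc K) f.denom :=
    (div_eq_iff hd).mp (RatFunc.num_div_denom f)
  have h0 := Epoly f.num
  rw [hfd, Emul, Epoly, mul_zero, zero_add] at h0
  exact (mul_eq_zero.mp h0).resolve_left hd

lemma sum_form {ι : Type*} (s : Finset ι) (f : ι → RatFunc K) (b : K)
    (hf : ∀ i ∈ s, ∃ u v : K[X], v.eval b ≠ 0 ∧
      f i = algebraMap K[X] (RatFunc K) u / algebraMap K[X] (RatFunc K) v) :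
    ∃ u v : K[X], v.eval b ≠ 0 ∧
      ∑ i ∈ s, f i = algebraMap K[X] (RatFunc K) u / algebraMap K[X] (RatFunc K) v := by
  classical
  induction s using Finset.cons_induction with
  | empty => exact ⟨0, 1, by simp⟩
  | cons i s his ih =>
    obtain ⟨u₁, v₁, hv₁, h₁⟩ := hf i (Finset.mem_cons_self _ _)
    obtain ⟨u₂, v₂, hv₂, h₂⟩ := ih fun j hj => hf j (Finset.mem_cons_of_mem hj)
    have hv₁0 : v₁ ≠ 0 := fun h => hv₁ (by simp [h])
    have hv₂0 : v₂ ≠ 0 := fun h => hv₂ (by simp [h])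
    refine ⟨u₁ * v₂ + v₁ * u₂, v₁ * v₂, by simp [hv₁, hv₂], ?_⟩
    rw [Finset.sum_cons, h₁, h₂,
      div_add_div _ _ (RatFunc.algebraMap_ne_zero hv₁0) (RatFunc.algebraMap_ne_zero hv₂0),
      map_add, map_mul, map_mul, map_mul]

lemma key [CharZero K] (D : Derivation K (RatFunc K) (RatFunc K))
    (hD : ∀ p : K[X], D (algebraMap K[X] (RatFunc K) p)
        = algebraMap K[X] (RatFunc K) (derivative p))
    (h : RatFunc K) (c b : K) (u v : K[X]) (hv : v.eval b ≠ 0)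
    (heq : D h = RatFunc.C c / (RatFunc.X - RatFunc.C b)
        + algebraMap K[X] (RatFunc K) u / algebraMap K[X] (RatFunc K) v) :
    c = 0 := by
  set φ := algebraMap K[X] (RatFunc K)
  set p := h.num with hp
  set q := h.denom with hq
  have hq0 : q ≠ 0 := RatFunc.denom_ne_zero h
  have cop : IsCoprime p q := RatFunc.isCoprime_num_denom h
  have hv0 : v ≠ 0 := fun h0 => hv (by simp [h0])
  set s : K[X] := X - Polynomial.C b with hs
  have hs0 : s ≠ 0 := Polynomial.X_sub_C_ne_zero b
  have hsb : s.eval b = 0 := by simp [hs]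
  have hφq : φ q ≠ 0 := RatFunc.algebraMap_ne_zero hq0
  have e1 : D h = φ (derivative p * q - p * derivative q) / φ (q ^ 2) := by
    conv_lhs => rw [← RatFunc.num_div_denom h]
    rw [Derivation.leibniz_div, hD, hD]
    simp only [smul_eq_mul, map_sub, map_mul, map_pow, φ, p, q]
    have hd' : algebraMap K[X] (RatFunc K) h.denom ≠ 0 := hφq
    field_simp
  have e2 : RatFunc.C c / (RatFunc.X - RatFunc.C b) + φ u / φ v
      = φ (Polynomial.C c * v + s * u) / φ (s * v) := by
    have hXb : RatFunc.X - RatFunc.C b = φ s := by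
      rw [hs, map_sub, RatFunc.algebraMap_X, RatFunc.algebraMap_C]
    have hCc : RatFunc.C c = φ (Polynomial.C c) := (RatFunc.algebraMap_C c).symm
    rw [hXb, hCc, div_add_div _ _ (RatFunc.algebraMap_ne_zero hs0)
      (RatFunc.algebraMap_ne_zero hv0), map_add, map_mul, map_mul, map_mul]
  have main : (derivative p * q - p * derivative q) * (s * v)
      = (Polynomial.C c * v + s * u) * q ^ 2 := by
    apply RatFunc.algebraMap_injective (K := K)
    rw [e1, e2] at heq
    rw [div_eq_div_iff (RatFunc.algebraMap_ne_zero (pow_ne_zero 2 hq0))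
      (RatFunc.algebraMap_ne_zero (mul_ne_zero hs0 hv0))] at heq
    simp only [map_mul, map_pow, map_sub, map_add] at heq ⊢
    exact heq
  obtain ⟨r, hqr, hr⟩ := q.exists_eq_pow_rootMultiplicity_mul_and_not_dvd hq0 b
  rw [← hs] at hqr hr
  have hrb : r.eval b ≠ 0 := fun h0 => hr (dvd_iff_isRoot.mpr h0)
  set m := q.rootMultiplicity b with hm
  clear_value m
  rcases m with _ | k
  · -- no pole of h at b
    have hqb : q.eval b ≠ 0 := by
      rw [hqr]; simpa [hsb] using hrb
    have := congrArg (Polynomial.eval b) main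
    simp only [eval_mul, eval_sub, eval_add, eval_pow, eval_C, hsb, mul_zero, zero_mul, add_zero] at this
    rcases mul_eq_zero.mp this.symm with h0 | h0
    · rcases mul_eq_zero.mp h0 with h1 | h1
      · exact h1
      · exact absurd h1 hv
    · exact absurd h0 (pow_ne_zero 2 hqb)
  · -- pole of order k+1 : impossible
    exfalso
    have hdq : derivative q = Polynomial.C ((k : K) + 1) * s ^ k * r
        + s ^ (k + 1) * derivative r := by
      rw [hqr, derivative_mul, derivative_pow, derivative_X_sub_C, Nat.add_sub_cancel]
      push_cast
      ring
    set w : K[X] := derivative p * s * r - Polynomial.C ((k : K) + 1) * p * r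
        - p * s * derivative r with hw
    have lhs_eq : (derivative p * q - p * derivative q) * (s * v)
        = s ^ (k + 1) * (w * v) := by
      rw [hdq, hqr, hw]; ring
    have rhs_eq : (Polynomial.C c * v + s * u) * q ^ 2
        = s ^ (k + 1) * (s ^ (k + 1) * ((Polynomial.C c * v + s * u) * r ^ 2)) := by
      rw [hqr]; ring
    have main2 : w * v = s ^ (k + 1) * ((Polynomial.C c * v + s * u) * r ^ 2) :=
      mul_left_cancel₀ (pow_ne_zero (k + 1) hs0) (by rw [← lhs_eq, main, rhs_eq])
    have hev := congrArg (Polynomial.eval b) main2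
    simp only [hw, eval_mul, eval_sub, eval_add, eval_pow, eval_C, hsb, mul_zero, zero_mul,
      zero_sub, pow_succ, zero_mul, mul_zero] at hev
    -- hev : (0 - ((k:K)+1) * p.eval b * r.eval b - 0) * v.eval b = 0
    have hk : ((k : K) + 1) ≠ 0 := Nat.cast_add_one_ne_zero k
    have hpb : p.eval b = 0 := by
      have h2 := (mul_eq_zero.mp hev).resolve_right hv
      have h3 : ((k : K) + 1) * eval b p * eval b r = 0 := by linear_combination -h2
      exact (mul_eq_zero.mp ((mul_eq_zero.mp h3).resolve_right hrb)).resolve_left hk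
    obtain ⟨x, y, hxy⟩ := cop
    have := congrArg (Polynomial.eval b) hxy
    have hqb : q.eval b = 0 := by
      rw [hqr]; simp [hsb, pow_succ]
    simp [hpb, hqb] at this

end ResiduesConstAux

open ResiduesConstAux in
/-- **The residues appearing in a compatible system are constants.**
`K` is a field of characteristic zero with a derivation `δ`, extended to a derivation
`δ'` of `K(X) = RatFunc K` with `δ'(X) = 0`, and `D` is the unique derivation on `K(X)`
extending the polynomial derivative `d/dX`.  If
`a = D(g₀) + Σ_ℓ γ_ℓ/(X − β_ℓ)` with pairwise distinct `β_ℓ ∈ K` and `γ_ℓ ∈ K`,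
and `δ'(a) = D(b)` for some `b ∈ K(X)`, then `δ(γ_ℓ) = 0` for every `ℓ`. -/
theorem residues_are_constants
    (K : Type*) [Field K] [CharZero K]
    (δ : Derivation ℤ K K)
    (δ' : Derivation ℤ (RatFunc K) (RatFunc K))
    (hδ'C : ∀ x : K, δ' (RatFunc.C x) = RatFunc.C (δ x))
    (hδ'X : δ' RatFunc.X = 0)
    (D : Derivation K (RatFunc K) (RatFunc K))
    (hD : ∀ p : Polynomial K,
      D (algebraMap (Polynomial K) (RatFunc K) p)
        = algebraMap (Polynomial K) (RatFunc K) (Polynomial.derivative p))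
    (L : ℕ) (β γ : Fin L → K) (hβ : Function.Injective β)
    (a g₀ : RatFunc K)
    (ha : a = D g₀ + ∑ ℓ, RatFunc.C (γ ℓ) / (RatFunc.X - RatFunc.C (β ℓ)))
    (hb : ∃ b : RatFunc K, δ' a = D b) :
    ∀ ℓ, δ (γ ℓ) = 0 := by
  classical
  have hDC : ∀ x : K, D (RatFunc.C x) = 0 := fun x => by
    have := hD (Polynomial.C x)
    rwa [derivative_C, map_zero, RatFunc.algebraMap_C] at this
  have hDX : D RatFunc.X = 1 := by
    have := hD Polynomial.X
    rwa [derivative_X, map_one, RatFunc.algebraMap_X] at this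
  -- δ' and D commute
  have hcomm : ∀ f : RatFunc K, δ' (D f) = D (δ' f) := by
    refine comm_eq δ' D (fun x => ?_) ?_
    · rw [hDC, map_zero, hδ'C, hDC]
    · rw [hDX, hδ'X, map_zero, Derivation.map_one_eq_zero]
  set T : Fin L → RatFunc K := fun ℓ => RatFunc.X - RatFunc.C (β ℓ) with hT
  have hT0 : ∀ ℓ, T ℓ ≠ 0 := fun ℓ => X_sub_C_ne_zero' (β ℓ)
  have hterm : ∀ x y : K, δ' (RatFunc.C x / (RatFunc.X - RatFunc.C y))
      = RatFunc.C (δ x) / (RatFunc.X - RatFunc.C y)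
        + RatFunc.C (x * δ y) / (RatFunc.X - RatFunc.C y) ^ 2 := by
    intro x y
    have ht : RatFunc.X - RatFunc.C y ≠ 0 := X_sub_C_ne_zero' y
    rw [Derivation.leibniz_div, hδ'C, map_sub, hδ'X, hδ'C, map_mul]
    simp only [smul_eq_mul]
    field_simp
    ring
  have hDterm : ∀ x y : K, D (RatFunc.C x / (RatFunc.X - RatFunc.C y))
      = -(RatFunc.C x / (RatFunc.X - RatFunc.C y) ^ 2) := by
    intro x y
    have ht : RatFunc.X - RatFunc.C y ≠ 0 := X_sub_C_ne_zero' y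
    rw [Derivation.leibniz_div, hDC, map_sub, hDX, hDC]
    simp only [smul_eq_mul]
    field_simp
    ring
  have hδ'a : δ' a = D (δ' g₀ - ∑ ℓ, RatFunc.C (γ ℓ * δ (β ℓ)) / T ℓ)
      + ∑ ℓ, RatFunc.C (δ (γ ℓ)) / T ℓ := by
    rw [ha, map_add, map_sum, hcomm, map_sub, map_sum]
    simp only [hterm, hDterm, hT]
    rw [Finset.sum_add_distrib]
    simp only [Finset.sum_neg_distrib]
    ring
  obtain ⟨b, hab⟩ := hb
  have hsum : ∑ ℓ, RatFunc.C (δ (γ ℓ)) / T ℓ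
      = D (b - (δ' g₀ - ∑ ℓ, RatFunc.C (γ ℓ * δ (β ℓ)) / T ℓ)) := by
    rw [map_sub, ← hab, hδ'a]; ring
  intro ℓ₀
  obtain ⟨u, v, hv, hg⟩ := sum_form (Finset.univ.erase ℓ₀)
    (fun ℓ => RatFunc.C (δ (γ ℓ)) / T ℓ) (β ℓ₀)
    (by
      intro ℓ hℓ
      refine ⟨Polynomial.C (δ (γ ℓ)), X - Polynomial.C (β ℓ), ?_, ?_⟩
      · simp only [eval_sub, eval_X, eval_C]
        exact sub_ne_zero.mpr fun h => Finset.ne_of_mem_erase hℓ (hβ h.symm)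
      · rw [map_sub, RatFunc.algebraMap_X, RatFunc.algebraMap_C, RatFunc.algebraMap_C])
  refine key D hD (b - (δ' g₀ - ∑ ℓ, RatFunc.C (γ ℓ * δ (β ℓ)) / T ℓ))
    (δ (γ ℓ₀)) (β ℓ₀) u v hv ?_
  rw [← hsum, ← hg]
  exact (Finset.add_sum_erase _ _ (Finset.mem_univ ℓ₀)).symm
end

section
/- Let F be a field of characteristic zero, let K = F(x_1, …, x_N) be the fraction field of R = F[x_1, …, x_N], and let D be the unique derivation on K extending the partial derivative ∂/∂x_1. Let d ∈ R be irreducible with ∂d/∂x_1 ≠ 0, and let r ∈ R be a polynomial not divisible by d. Then for every natural number i there exists a polynomial r_i ∈ R not divisible by d such that D^i(r/d) = r_i/d^{i+1}. (Iterated derivatives increase the pole order at d by exactly one each time.) -/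
open MvPolynomial

private lemma degreeOf_pderiv_lt_aux {F : Type*} [CommRing F] {σ : Type*} [DecidableEq σ]
    (p : MvPolynomial σ F) (i : σ) (h : pderiv i p ≠ 0) :
    degreeOf i (pderiv i p) < degreeOf i p := by
  have key : ∀ m ∈ (pderiv i p).support, m i + 1 ≤ degreeOf i p := by
    intro m hm
    rw [MvPolynomial.mem_support_iff] at hm
    have hp : pderiv i p = ∑ v ∈ p.support, monomial (v - Finsupp.single i 1)
        (coeff v p * (v i : F)) := by
      conv_lhs => rw [p.as_sum, map_sum]
      exact Finset.sum_congr rfl fun v _ => pderiv_monomial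
    rw [hp, MvPolynomial.coeff_sum] at hm
    obtain ⟨v, hv, hvm⟩ := Finset.exists_ne_zero_of_sum_ne_zero hm
    rw [coeff_monomial] at hvm
    split_ifs at hvm with hEq
    · have hvi : v i ≠ 0 := fun h0 => hvm (by rw [h0]; simp)
      have h1 : m i = v i - 1 := by rw [← hEq]; simp
      have h2 : v i ≤ degreeOf i p := monomial_le_degreeOf i hv
      omega
    · exact absurd rfl hvm
  obtain ⟨m, hm⟩ := (support_nonempty.mpr h)
  have hpos : 0 < degreeOf i p := lt_of_lt_of_le (Nat.succ_pos _) (key m hm)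
  rw [MvPolynomial.degreeOf_lt_iff hpos]
  intro m hm
  exact lt_of_lt_of_le (Nat.lt_succ_self _) (key m hm)

private lemma not_dvd_pderiv_zero {F : Type*} [Field F] {n : ℕ}
    (d : MvPolynomial (Fin (n + 1)) F) (hd : Irreducible d) (h : pderiv 0 d ≠ 0) :
    ¬ d ∣ pderiv 0 d := by
  rintro ⟨c, hc⟩
  have hd0 : d ≠ 0 := hd.ne_zero
  have hc0 : c ≠ 0 := by rintro rfl; rw [mul_zero] at hc; exact h hc
  have hdeg : degreeOf 0 (d * c) = degreeOf 0 d + degreeOf 0 c := by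
    have h1 : ∀ q : MvPolynomial (Fin (n + 1)) F,
        degreeOf 0 q = ((MvPolynomial.finSuccEquiv F n) q).natDegree :=
      fun q => (natDegree_finSuccEquiv q).symm
    rw [h1, h1, h1, map_mul]
    exact Polynomial.natDegree_mul (by simpa using hd0) (by simpa using hc0)
  have hlt := degreeOf_pderiv_lt_aux d 0 h
  rw [hc, hdeg] at hlt
  omega

private lemma not_dvd_pderiv {F : Type*} [Field F] {N : ℕ} (x₁ : Fin N)
    (d : MvPolynomial (Fin N) F) (hd : Irreducible d) (h : pderiv x₁ d ≠ 0) :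
    ¬ d ∣ pderiv x₁ d := by
  obtain ⟨n, rfl⟩ : ∃ n, N = n + 1 :=
    ⟨N - 1, (Nat.succ_pred_eq_of_pos (Fin.pos x₁)).symm⟩
  rintro hdvd
  set e : Fin (n + 1) ≃ Fin (n + 1) := Equiv.swap x₁ 0 with he
  have hrename : pderiv (e x₁) (rename e d) = rename e (pderiv x₁ d) :=
    pderiv_rename e.injective x₁ d
  have hex : e x₁ = 0 := Equiv.swap_apply_left x₁ 0
  have hinj : Function.Injective (rename (R := F) e) := rename_injective e e.injective
  have hE : Irreducible (rename e d) := by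
    have : Irreducible ((renameEquiv F e).toMulEquiv d) :=
      (MulEquiv.irreducible_iff _).mpr hd
    simpa using this
  refine not_dvd_pderiv_zero (rename e d) hE ?_ ?_
  · rw [hex] at hrename
    rw [hrename]
    intro h0
    exact h (hinj (by simpa using h0))
  · rw [hex] at hrename
    rw [hrename]
    exact map_dvd (rename e).toRingHom hdvd

/-- **Iterated derivatives increase the pole order at `d` by exactly one each time.**
`F` is a field of characteristic zero, `R = F[x_1, …, x_N]`, `K` is its fraction field,
and `D` is the unique derivation on `K` extending `∂/∂x_1` (here the distinguished
variable is `x₁`).  If `d ∈ R` is irreducible with `∂d/∂x_1 ≠ 0` and `r ∈ R` is not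
divisible by `d`, then for every `i : ℕ` there is `r_i ∈ R` not divisible by `d` with
`D^i(r/d) = r_i/d^(i+1)`. -/
theorem iterated_derivative_pole_order
    (F : Type*) [Field F] [CharZero F] (N : ℕ) (x₁ : Fin N)
    (D : Derivation F (FractionRing (MvPolynomial (Fin N) F))
      (FractionRing (MvPolynomial (Fin N) F)))
    (hD : ∀ p : MvPolynomial (Fin N) F,
      D (algebraMap (MvPolynomial (Fin N) F) (FractionRing (MvPolynomial (Fin N) F)) p)
        = algebraMap (MvPolynomial (Fin N) F) (FractionRing (MvPolynomial (Fin N) F))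
            (pderiv x₁ p))
    (d : MvPolynomial (Fin N) F) (hd : Irreducible d) (hd' : pderiv x₁ d ≠ 0)
    (r : MvPolynomial (Fin N) F) (hr : ¬ d ∣ r) :
    ∀ i : ℕ, ∃ rᵢ : MvPolynomial (Fin N) F, ¬ d ∣ rᵢ ∧
      (⇑D)^[i]
        (algebraMap (MvPolynomial (Fin N) F) (FractionRing (MvPolynomial (Fin N) F)) r /
         algebraMap (MvPolynomial (Fin N) F) (FractionRing (MvPolynomial (Fin N) F)) d)
      = algebraMap (MvPolynomial (Fin N) F) (FractionRing (MvPolynomial (Fin N) F)) rᵢ /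
        (algebraMap (MvPolynomial (Fin N) F) (FractionRing (MvPolynomial (Fin N) F)) d)
          ^ (i + 1) := by
  set A := algebraMap (MvPolynomial (Fin N) F) (FractionRing (MvPolynomial (Fin N) F)) with hA
  have hAinj : Function.Injective A :=
    IsFractionRing.injective (MvPolynomial (Fin N) F) (FractionRing (MvPolynomial (Fin N) F))
  have hdA : A d ≠ 0 := fun h0 => hd.ne_zero (hAinj (by simpa using h0))
  have hprime : Prime d :=
    (UniqueFactorizationMonoid.irreducible_iff_prime).mp hd
  intro i
  induction i with
  | zero => exact ⟨r, hr, by simp⟩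
  | succ i ih =>
    obtain ⟨rᵢ, hri, heq⟩ := ih
    refine ⟨d * pderiv x₁ rᵢ - ((i : MvPolynomial (Fin N) F) + 1) * (rᵢ * pderiv x₁ d), ?_, ?_⟩
    · intro hdvd
      have h1 : d ∣ ((i : MvPolynomial (Fin N) F) + 1) * (rᵢ * pderiv x₁ d) :=
        (dvd_sub_right (Dvd.intro _ rfl)).mp hdvd
      have hu : IsUnit ((i : MvPolynomial (Fin N) F) + 1) := by
        have hC : ((i : MvPolynomial (Fin N) F) + 1) = C ((i : F) + 1) := by
          simp
        rw [hC]
        exact (isUnit_iff_ne_zero.mpr (Nat.cast_add_one_ne_zero i)).map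
          (C : F →+* MvPolynomial (Fin N) F)
      rw [hu.dvd_mul_left] at h1
      rcases hprime.2.2 _ _ h1 with h2 | h2
      · exact hri h2
      · exact not_dvd_pderiv x₁ d hd hd' h2
    · rw [Function.iterate_succ_apply', heq, Derivation.leibniz_div, Derivation.leibniz_pow,
        hD, hD]
      have h3 : (i + 1 : ℕ) - 1 = i := rfl
      rw [h3, map_sub A, map_mul A, map_mul A, map_mul A]
      have h4 : A ((i : MvPolynomial (Fin N) F) + 1) = (i : FractionRing (MvPolynomial (Fin N) F)) + 1 := by
        rw [map_add, map_natCast, map_one]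
      rw [h4]
      simp only [smul_eq_mul, nsmul_eq_mul]
      field_simp [hdA]
      push_cast
      ring
end

section
/- Let F be a field of characteristic zero and α ∈ F. Then: (i) the nonvanishing rising factorial (α)_k^* is nonzero for every k ∈ ℤ; and (ii) both sequences T(k) = (α)_k and T(k) = (α)_k^* satisfy, for every k ∈ ℤ, the recurrence (k + α)·T(k+1) − (k + α)^2·T(k) = 0 (so (α)_k and (α)_k^* are solutions of a common first-order recurrence). -/
open scoped Classical

/-- The rising factorial `(α)_k` for `α ∈ F` and `k ∈ ℤ`:
`(α)_k = ∏_{i=0}^{k−1}(α + i)` if `k ≥ 0`;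
`(α)_k = ∏_{i=1}^{−k}(α − i)⁻¹` if `k < 0` and `α ∉ {1, 2, …, −k}`; and
`(α)_k = 0` otherwise. -/
noncomputable def risingFactorial {F : Type*} [Field F] [CharZero F] (α : F) (k : ℤ) : F :=
  if 0 ≤ k then ∏ i ∈ Finset.range k.toNat, (α + i)
  else if ∃ i ∈ Finset.Icc 1 (-k).toNat, α = (i : F) then 0
  else ∏ i ∈ Finset.Icc 1 (-k).toNat, (α - i)⁻¹

/-- The nonvanishing rising factorial `(α)_k^*`:
`(α)_k^* = (α)_k` if `(α)_k ≠ 0`;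
`(α)_k^* = (α)_{1−α}·(0)_{α+k}` if `α` is a positive integer and `α + k ≤ 0`; and
`(α)_k^* = (α)_{−α}·(1)_{α+k−1}` if `α` is a nonpositive integer and `α + k > 0`. -/
noncomputable def risingFactorialStar {F : Type*} [Field F] [CharZero F]
    (α : F) (k : ℤ) : F :=
  if risingFactorial α k ≠ 0 then risingFactorial α k
  else if h : ∃ a : ℤ, (a : F) = α ∧ 0 < a ∧ a + k ≤ 0 then
    risingFactorial α (1 - h.choose) * risingFactorial 0 (h.choose + k)
  else if h : ∃ a : ℤ, (a : F) = α ∧ a ≤ 0 ∧ 0 < a + k then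
    risingFactorial α (-h.choose) * risingFactorial 1 (h.choose + k - 1)
  else 0

section Helpers

variable {F : Type*} [Field F] [CharZero F]

/-- Step lemma: `(α)_{k+1} = (k+α)·(α)_k` when `k + α ≠ 0`. -/
lemma rf_step (α : F) (k : ℤ) (h : (k : F) + α ≠ 0) :
    risingFactorial α (k + 1) = ((k : F) + α) * risingFactorial α k := by
  rcases le_or_gt 0 k with hk | hk
  · rw [risingFactorial, risingFactorial, if_pos hk, if_pos (by omega : (0:ℤ) ≤ k + 1)]
    have ht : (k + 1).toNat = k.toNat + 1 := by omega
    have hc : ((k.toNat : ℕ) : F) = (k : F) := by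
      rw [← Int.cast_natCast]; exact congrArg _ (Int.toNat_of_nonneg hk)
    rw [ht, Finset.prod_range_succ, hc]; ring
  · rcases eq_or_lt_of_le (by omega : k + 1 ≤ 0) with h1 | h1
    · -- k = -1
      have hk1 : k = -1 := by omega
      subst hk1
      push_cast at h
      have hα : α - 1 ≠ 0 := by
        intro hc; apply h; linear_combination hc
      have e0 : (-1 : ℤ) + 1 = 0 := by norm_num
      rw [e0, risingFactorial, risingFactorial, if_pos (le_refl (0:ℤ)),
        if_neg (by norm_num : ¬ (0:ℤ) ≤ -1)]
      rw [if_neg]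
      · have e1 : (-(-1:ℤ)).toNat = 1 := by norm_num
        rw [e1, Finset.Icc_self, Finset.prod_singleton, Int.toNat_zero,
          Finset.range_zero, Finset.prod_empty]
        push_cast
        field_simp
        ring
      · rintro ⟨i, hi, hαi⟩
        simp only [Finset.mem_Icc] at hi
        have e1 : (-(-1:ℤ)).toNat = 1 := by norm_num
        rw [e1] at hi
        have : i = 1 := by omega
        subst this
        apply hα; rw [hαi]; norm_num
    · -- k + 1 < 0
      have hsplit : (-k).toNat = (-(k+1)).toNat + 1 := by omega
      have hcast : (((-(k+1)).toNat + 1 : ℕ) : F) = -(k : F) := by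
        have e : (((-(k+1)).toNat + 1 : ℕ) : ℤ) = -k := by
          push_cast; omega
        calc (((-(k+1)).toNat + 1 : ℕ) : F)
            = ((((-(k+1)).toNat + 1 : ℕ) : ℤ) : F) := by push_cast; ring
          _ = ((-k : ℤ) : F) := by rw [e]
          _ = -(k : F) := by push_cast; ring
      by_cases hex : ∃ i ∈ Finset.Icc 1 (-(k+1)).toNat, α = (i : F)
      · have hex' : ∃ i ∈ Finset.Icc 1 (-k).toNat, α = (i : F) := by
          obtain ⟨i, hi, hαi⟩ := hex
          refine ⟨i, ?_, hαi⟩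
          simp only [Finset.mem_Icc] at hi ⊢
          omega
        rw [risingFactorial, risingFactorial, if_neg (by omega : ¬ (0:ℤ) ≤ k + 1),
          if_neg (by omega : ¬ (0:ℤ) ≤ k), if_pos hex, if_pos hex', mul_zero]
      · have hex' : ¬ ∃ i ∈ Finset.Icc 1 (-k).toNat, α = (i : F) := by
          rintro ⟨i, hi, hαi⟩
          simp only [Finset.mem_Icc] at hi
          rcases lt_or_eq_of_le hi.2 with hlt | heq
          · exact hex ⟨i, by simp only [Finset.mem_Icc]; omega, hαi⟩
          · apply h
            rw [hαi, heq, hsplit, hcast]; ring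
        rw [risingFactorial, risingFactorial, if_neg (by omega : ¬ (0:ℤ) ≤ k + 1),
          if_neg (by omega : ¬ (0:ℤ) ≤ k), if_neg hex, if_neg hex']
        rw [hsplit, Finset.prod_Icc_succ_top (by omega : 1 ≤ (-(k+1)).toNat + 1)]
        rw [hcast]
        have hαk : (α - -(k:F))⁻¹ = ((k : F) + α)⁻¹ := by
          rw [sub_neg_eq_add, add_comm]
        rw [hαk]
        rw [mul_comm ((k:F) + α), mul_assoc, inv_mul_cancel₀ h, mul_one]

lemma rf_eq_zero_pos (α : F) (a k : ℤ) (ha : (a : F) = α) (ha0 : 0 < a)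
    (hak : a + k ≤ 0) : risingFactorial α k = 0 := by
  have hk : k < 0 := by omega
  rw [risingFactorial, if_neg (by omega : ¬ (0:ℤ) ≤ k), if_pos]
  exact ⟨a.toNat, by simp only [Finset.mem_Icc]; omega, by
    rw [← ha, ← Int.cast_natCast]; exact congrArg _ (Int.toNat_of_nonneg ha0.le).symm⟩

lemma rf_eq_zero_neg (α : F) (a k : ℤ) (ha : (a : F) = α) (ha0 : a ≤ 0)
    (hak : 0 < a + k) : risingFactorial α k = 0 := by
  have hk : 0 ≤ k := by omega
  rw [risingFactorial, if_pos hk]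
  apply Finset.prod_eq_zero (i := (-a).toNat) (by simp only [Finset.mem_range]; omega)
  have : (((-a).toNat : ℕ) : F) = -(a : F) := by
    rw [← Int.cast_natCast, Int.toNat_of_nonneg (by omega : 0 ≤ -a)]; push_cast; ring
  rw [this, ← ha]; ring

lemma rf_ne_zero (α : F) (k : ℤ)
    (h1 : ¬ ∃ a : ℤ, (a : F) = α ∧ 0 < a ∧ a + k ≤ 0)
    (h2 : ¬ ∃ a : ℤ, (a : F) = α ∧ a ≤ 0 ∧ 0 < a + k) :
    risingFactorial α k ≠ 0 := by
  rcases le_or_gt 0 k with hk | hk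
  · rw [risingFactorial, if_pos hk]
    apply Finset.prod_ne_zero_iff.mpr
    intro i hi hzero
    simp only [Finset.mem_range] at hi
    apply h2
    refine ⟨-(i : ℤ), ?_, by omega, by omega⟩
    push_cast
    linear_combination -hzero
  · have hex : ¬ ∃ i ∈ Finset.Icc 1 (-k).toNat, α = (i : F) := by
      rintro ⟨i, hi, hαi⟩
      simp only [Finset.mem_Icc] at hi
      exact h1 ⟨(i : ℤ), by exact_mod_cast hαi.symm, by omega, by omega⟩
    rw [risingFactorial, if_neg (by omega : ¬ (0:ℤ) ≤ k), if_neg hex]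
    apply Finset.prod_ne_zero_iff.mpr
    intro i hi
    apply inv_ne_zero
    intro hzero
    exact hex ⟨i, hi, sub_eq_zero.mp hzero⟩

lemma rfs_ne_zero (α : F) (k : ℤ) : risingFactorialStar α k ≠ 0 := by
  rw [risingFactorialStar]
  by_cases h0 : risingFactorial α k ≠ 0
  · rwa [if_pos h0]
  rw [if_neg h0]
  replace h0 : risingFactorial α k = 0 := not_not.mp h0
  by_cases h2 : ∃ a : ℤ, (a : F) = α ∧ 0 < a ∧ a + k ≤ 0
  · rw [dif_pos h2]
    obtain ⟨ha, ha0, hak⟩ := h2.choose_spec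
    set a := h2.choose with hadef
    apply mul_ne_zero
    · apply rf_ne_zero
      · rintro ⟨b, hb, hb0, hbk⟩
        have : b = a := Int.cast_injective (by rw [hb, ha])
        omega
      · rintro ⟨b, hb, hb0, hbk⟩
        have : b = a := Int.cast_injective (by rw [hb, ha])
        omega
    · apply rf_ne_zero
      · rintro ⟨b, hb, hb0, hbk⟩
        have : b = 0 := by exact_mod_cast hb
        omega
      · rintro ⟨b, hb, hb0, hbk⟩
        have : b = 0 := by exact_mod_cast hb
        omega
  · rw [dif_neg h2]
    by_cases h3 : ∃ a : ℤ, (a : F) = α ∧ a ≤ 0 ∧ 0 < a + k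
    · rw [dif_pos h3]
      obtain ⟨ha, ha0, hak⟩ := h3.choose_spec
      set a := h3.choose with hadef
      apply mul_ne_zero
      · apply rf_ne_zero
        · rintro ⟨b, hb, hb0, hbk⟩
          have : b = a := Int.cast_injective (by rw [hb, ha])
          omega
        · rintro ⟨b, hb, hb0, hbk⟩
          have : b = a := Int.cast_injective (by rw [hb, ha])
          omega
      · apply rf_ne_zero
        · rintro ⟨b, hb, hb0, hbk⟩
          have : b = 1 := by exact_mod_cast hb
          omega
        · rintro ⟨b, hb, hb0, hbk⟩
          have : b = 1 := by exact_mod_cast hb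
          omega
    · rw [dif_neg h3]
      exact absurd h0 (rf_ne_zero α k h2 h3)

lemma rfs_step (α : F) (k : ℤ) (h : (k : F) + α ≠ 0) :
    risingFactorialStar α (k + 1) = ((k : F) + α) * risingFactorialStar α k := by
  by_cases h0 : risingFactorial α k = 0
  · have hk1 : risingFactorial α (k + 1) = 0 := by
      rw [rf_step α k h, h0, mul_zero]
    by_cases h2 : ∃ a : ℤ, (a : F) = α ∧ 0 < a ∧ a + k ≤ 0
    · obtain ⟨a, ha, ha0, hak⟩ := h2
      have hakne : a + k ≠ 0 := by
        intro e
        apply h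
        have : ((a + k : ℤ) : F) = 0 := by rw [e]; norm_num
        push_cast at this
        rw [ha] at this; linear_combination this
      have h2' : ∃ b : ℤ, (b : F) = α ∧ 0 < b ∧ b + (k + 1) ≤ 0 :=
        ⟨a, ha, ha0, by omega⟩
      have h2'' : ∃ b : ℤ, (b : F) = α ∧ 0 < b ∧ b + k ≤ 0 := ⟨a, ha, ha0, hak⟩
      rw [risingFactorialStar, risingFactorialStar,
        if_neg (not_not.mpr hk1), if_neg (not_not.mpr h0),
        dif_pos h2', dif_pos h2'']
      have e1 : h2'.choose = a := Int.cast_injective (by rw [h2'.choose_spec.1, ha])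
      have e2 : h2''.choose = a := Int.cast_injective (by rw [h2''.choose_spec.1, ha])
      rw [e1, e2]
      have hstep := rf_step (0 : F) (a + k) (by
        intro hc; apply h; push_cast at hc; rw [ha] at hc
        linear_combination hc)
      have harr : a + (k + 1) = (a + k) + 1 := by ring
      rw [harr, hstep]
      have : ((a : F) + (k : F)) = (k : F) + α := by rw [ha]; ring
      push_cast
      rw [this]; ring
    · have h3 : ∃ a : ℤ, (a : F) = α ∧ a ≤ 0 ∧ 0 < a + k := by
        by_contra h3
        exact rf_ne_zero α k h2 h3 h0
      obtain ⟨a, ha, ha0, hak⟩ := h3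
      have h3' : ∃ b : ℤ, (b : F) = α ∧ b ≤ 0 ∧ 0 < b + (k + 1) :=
        ⟨a, ha, ha0, by omega⟩
      have h3'' : ∃ b : ℤ, (b : F) = α ∧ b ≤ 0 ∧ 0 < b + k := ⟨a, ha, ha0, hak⟩
      have hn2' : ¬ ∃ b : ℤ, (b : F) = α ∧ 0 < b ∧ b + (k + 1) ≤ 0 := by
        rintro ⟨b, hb, hb0, hbk⟩
        have : b = a := Int.cast_injective (by rw [hb, ha])
        omega
      have hn2'' : ¬ ∃ b : ℤ, (b : F) = α ∧ 0 < b ∧ b + k ≤ 0 := by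
        rintro ⟨b, hb, hb0, hbk⟩
        have : b = a := Int.cast_injective (by rw [hb, ha])
        omega
      rw [risingFactorialStar, risingFactorialStar,
        if_neg (not_not.mpr hk1), if_neg (not_not.mpr h0),
        dif_neg hn2', dif_neg hn2'', dif_pos h3', dif_pos h3'']
      have e1 : h3'.choose = a := Int.cast_injective (by rw [h3'.choose_spec.1, ha])
      have e2 : h3''.choose = a := Int.cast_injective (by rw [h3''.choose_spec.1, ha])
      rw [e1, e2]
      have hstep := rf_step (1 : F) (a + k - 1) (by
        intro hc
        have h0' : ((a + k : ℤ) : F) = 0 := by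
          push_cast; push_cast at hc; linear_combination hc
        have : (a + k : ℤ) = 0 := by exact_mod_cast h0'
        omega)
      have harr : a + (k + 1) - 1 = (a + k - 1) + 1 := by ring
      rw [harr, hstep]
      have : ((a + k - 1 : ℤ) : F) + 1 = (k : F) + α := by push_cast; rw [ha]; ring
      rw [this]; ring
  · have hk1 : risingFactorial α (k + 1) ≠ 0 := by
      rw [rf_step α k h]; exact mul_ne_zero h h0
    rw [risingFactorialStar, risingFactorialStar, if_pos hk1,
      if_pos (by exact h0 : risingFactorial α k ≠ 0), rf_step α k h]

end Helpers

/-- **`(α)_k` and `(α)_k^*` are conjugate.**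
For a field `F` of characteristic zero and `α ∈ F`: (i) the nonvanishing rising
factorial `(α)_k^*` is nonzero for every `k ∈ ℤ`; and (ii) both `T(k) = (α)_k` and
`T(k) = (α)_k^*` satisfy the recurrence `(k + α)·T(k+1) − (k + α)²·T(k) = 0` for every
`k ∈ ℤ`, so they are solutions of a common first-order recurrence. -/
theorem risingFactorialStar_nonzero_and_common_recurrence
    (F : Type*) [Field F] [CharZero F] (α : F) (k : ℤ) :
    risingFactorialStar α k ≠ 0 ∧
    ((k : F) + α) * risingFactorial α (k + 1)
      - ((k : F) + α) ^ 2 * risingFactorial α k = 0 ∧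
    ((k : F) + α) * risingFactorialStar α (k + 1)
      - ((k : F) + α) ^ 2 * risingFactorialStar α k = 0 := by
  refine ⟨rfs_ne_zero α k, ?_, ?_⟩
  · by_cases hc : (k : F) + α = 0
    · rw [hc]; ring
    · rw [rf_step α k hc]; ring
  · by_cases hc : (k : F) + α = 0
    · rw [hc]; ring
    · rw [rfs_step α k hc]; ring
end
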